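/- Let ψ ∈ L¹(ℝ³,ℂ) ∩ L²(ℝ³,ℂ), let n₁, …, n_{N_o} ∈ S² with positive weights Δ₁, …, Δ_{N_o}, and for each i fix R_{n_i} ∈ SO(3) with R_{n_i} e_z = n_i. Let ρ > 0 and suppose N_ψ^d(ω) = 1 for almost every ω in the ball B_ρ = {ω ∈ ℝ³ : ‖ω‖ < ρ}, where N_ψ^d(ω) = ∑_{i=1}^{N_o} Δ_i (𝓕ψ)(R_{n_i}ᵀ ω). Then for every f ∈ L¹(ℝ³,ℂ) ∩ L²(ℝ³,ℂ) with supp(𝓕f) ⊆ B_ρ, the image is reconstructed exactly by summation over orientations: ∑_{i=1}^{N_o} Δ_i (W_ψ^d f)(x, n_i) = f(x) as elements of L²(ℝ³,ℂ). -/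

import Mathlib

open MeasureTheory Real

noncomputable section

/-- 3D Euclidean space. -/
abbrev R3 : Type := EuclideanSpace ℝ (Fin 3)

/-- The unit sphere `S² ⊂ ℝ³`. -/
abbrev S2 : Type := Metric.sphere (0 : R3) 1

/-- The unit vector `e_z`. -/
def ez : R3 := EuclideanSpace.single 2 1

/-- The orientation score for a single orientation with rotation `R`:
`(W_ψ^d f)(x, n_i) = ∫ conj(ψ(R_{n_i}ᵀ(x'-x))) f(x') dx'`, with `R_{n_i}ᵀ = R.symm`. -/
def OScoreD (R : R3 ≃ₗᵢ[ℝ] R3) (ψ f : R3 → ℂ) (x : R3) : ℂ :=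
  ∫ x', (starRingEnd ℂ) (ψ (R.symm (x' - x))) * f x'

open Filter
open scoped FourierTransform RealInnerProductSpace ComplexConjugate

section FourierHelpers

variable {V : Type*} [NormedAddCommGroup V] [InnerProductSpace ℝ V]
  [MeasurableSpace V] [BorelSpace V] [FiniteDimensional ℝ V]

lemma ft_smul (c : ℂ) (u : V → ℂ) (w : V) :
    𝓕 (fun x => c * u x) w = c * 𝓕 u w := by
  simp only [Real.fourier_eq, Circle.smul_def, ← integral_const_mul]
  congr 1 with v
  simp only [Circle.smul_def, smul_eq_mul]
  ring

lemma ft_sub {u v : V → ℂ} (hu : Integrable u) (hv : Integrable v) (w : V) :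
    𝓕 (fun x => u x - v x) w = 𝓕 u w - 𝓕 v w := by
  simp only [Real.fourier_eq]
  rw [← integral_sub ((Real.fourierIntegral_convergent_iff w).2 hu)
    ((Real.fourierIntegral_convergent_iff w).2 hv)]
  simp [smul_sub]

lemma ft_sum {ι : Type*} (s : Finset ι) {F : ι → V → ℂ} (hF : ∀ i, Integrable (F i)) (w : V) :
    𝓕 (fun x => ∑ i ∈ s, F i x) w = ∑ i ∈ s, 𝓕 (F i) w := by
  simp only [Real.fourier_eq]
  rw [← integral_finset_sum]
  · simp [Finset.smul_sum]
  · exact fun i _ => (Real.fourierIntegral_convergent_iff w).2 (hF i)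

lemma ft_conj (h : V → ℂ) (w : V) :
    𝓕 (fun x => conj (h x)) w = conj (𝓕 h (-w)) := by
  simp only [Real.fourier_eq, ← integral_conj]
  congr 1 with v
  rw [inner_neg_right, neg_neg, Circle.smul_def, Circle.smul_def, smul_eq_mul, smul_eq_mul,
    map_mul]
  congr 1
  rw [Real.fourierChar_apply, Real.fourierChar_apply, ← Complex.exp_conj]
  congr 1
  simp only [map_mul, Complex.conj_ofReal, Complex.conj_I]
  push_cast
  ring

lemma ft_translate (f : V → ℂ) (t w : V) :
    ∫ x, 𝐞 (-⟪x, w⟫) • f (x - t) = 𝐞 (-⟪t, w⟫) • 𝓕 f w := by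
  have h := congrFun (VectorFourier.fourierIntegral_comp_add_right 𝐞
    (volume : Measure V) (innerₗ V) f (-t)) w
  simp only [VectorFourier.fourierIntegral, Function.comp_def, ← sub_eq_add_neg] at h
  simp [innerₗ, inner_neg_left] at h
  exact h

lemma ft_conv {g f : V → ℂ} (hg : Integrable g) (hf : Integrable f) (w : V) :
    𝓕 (fun x => ∫ t, g t * f (x - t)) w = 𝓕 g w * 𝓕 f w := by
  have hint : Integrable (fun p : V × V => g p.2 * f (p.1 - p.2))
      ((volume : Measure V).prod volume) :=
    hg.convolution_integrand (ContinuousLinearMap.mul ℂ ℂ) hf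
  have hcont : Continuous (fun p : V × V => ((𝐞 (-⟪p.1, w⟫) : Circle) : ℂ)) := by
    refine continuous_subtype_val.comp (Real.continuous_fourierChar.comp ?_)
    exact (continuous_fst.inner continuous_const).neg
  have hint2 : Integrable (fun p : V × V => (𝐞 (-⟪p.1, w⟫) : Circle) • (g p.2 * f (p.1 - p.2)))
      ((volume : Measure V).prod volume) := by
    simp only [Circle.smul_def]
    exact hint.bdd_mul (c := 1) hcont.aestronglyMeasurable (ae_of_all _ fun p => le_of_eq (Circle.norm_coe _))
  calc 𝓕 (fun x => ∫ t, g t * f (x - t)) w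
      = ∫ x, ∫ t, 𝐞 (-⟪x, w⟫) • (g t * f (x - t)) := by
        rw [Real.fourier_eq]
        congr 1 with x
        simp only [Circle.smul_def, smul_eq_mul, ← integral_const_mul]
    _ = ∫ t, ∫ x, 𝐞 (-⟪x, w⟫) • (g t * f (x - t)) := integral_integral_swap hint2
    _ = ∫ t, g t * (𝐞 (-⟪t, w⟫) • 𝓕 f w) := by
        congr 1 with t
        rw [← ft_translate f t w, ← integral_const_mul]
        congr 1 with x
        simp only [Circle.smul_def, smul_eq_mul]
        ring
    _ = (∫ t, 𝐞 (-⟪t, w⟫) • g t) * 𝓕 f w := by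
        rw [← integral_mul_const]
        congr 1 with t
        simp only [Circle.smul_def, smul_eq_mul]
        ring
    _ = 𝓕 g w * 𝓕 f w := by rw [Real.fourier_eq, Real.fourier_eq]

lemma ft_inj {h : V → ℂ} (hh : Integrable h) (h0 : ∀ w, 𝓕 h w = 0) :
    ∀ᵐ x ∂(volume : Measure V), h x = 0 := by
  apply ae_eq_zero_of_integral_contDiff_smul_eq_zero hh.locallyIntegrable
  intro g hg hgsupp
  have hgc : ContDiff ℝ ((⊤ : ℕ∞) : WithTop ℕ∞) (fun x => (g x : ℂ)) := Complex.ofRealCLM.contDiff.comp hg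
  have hgcsupp : HasCompactSupport (fun x => (g x : ℂ)) :=
    hgsupp.comp_left (g := fun r : ℝ => (r : ℂ)) (by simp)
  have hdecay : ∀ k n : ℕ, ∃ C : ℝ, ∀ x : V,
      ‖x‖ ^ k * ‖iteratedFDeriv ℝ n (fun x => (g x : ℂ)) x‖ ≤ C := by
    intro k n
    have hK : HasCompactSupport
        (fun x : V => ‖x‖ ^ k * ‖iteratedFDeriv ℝ n (fun x => (g x : ℂ)) x‖) := by
      have h1 : HasCompactSupport (fun x : V => ‖iteratedFDeriv ℝ n (fun x => (g x : ℂ)) x‖) :=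
        (hgcsupp.iteratedFDeriv n).comp_left (g := fun y => ‖y‖) norm_zero
      exact h1.mul_left
    have hKc : Continuous
        (fun x : V => ‖x‖ ^ k * ‖iteratedFDeriv ℝ n (fun x => (g x : ℂ)) x‖) :=
      (continuous_norm.pow k).mul
        ((hgc.continuous_iteratedFDeriv (by exact_mod_cast le_top)).norm)
    obtain ⟨C, hC⟩ := hKc.bounded_above_of_compact_support hK
    exact ⟨C, fun x => by simpa using hC x⟩
  let G : SchwartzMap V ℂ := ⟨fun x => (g x : ℂ), hgc, hdecay⟩
  let φ : SchwartzMap V ℂ := (SchwartzMap.fourierTransformCLE ℂ (SchwartzMap V ℂ)).symm G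
  have hFG : 𝓕 ⇑φ = ⇑G := by
    rw [← SchwartzMap.fourier_coe, ← SchwartzMap.fourierTransformCLE_apply (R := ℂ) (f := φ)]
    exact congrArg (fun u : SchwartzMap V ℂ => ⇑u)
      ((FourierTransform.fourierCLE ℂ (SchwartzMap V ℂ)).apply_symm_apply G)
  have hflip : (innerₗ V).flip = innerₗ V := by
    apply LinearMap.ext; intro x; apply LinearMap.ext; intro y
    simpa using real_inner_comm y x
  have hmul := VectorFourier.integral_fourierIntegral_smul_eq_flip (F := ℂ)
    (e := Real.fourierChar) (μ := (volume : Measure V)) (ν := (volume : Measure V))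
    (L := innerₗ V) Real.continuous_fourierChar continuous_inner φ.integrable hh
  rw [hflip] at hmul
  have hRHS : ∫ x, φ x • (VectorFourier.fourierIntegral 𝐞 volume (innerₗ V) h x) = 0 := by
    have : ∀ x, VectorFourier.fourierIntegral 𝐞 (volume : Measure V) (innerₗ V) h x = 0 :=
      fun x => h0 x
    simp [this]
  rw [hRHS] at hmul
  calc ∫ x, g x • h x = ∫ x, (VectorFourier.fourierIntegral 𝐞 volume (innerₗ V) ⇑φ x) • h x := by
        congr 1 with x
        have : VectorFourier.fourierIntegral 𝐞 (volume : Measure V) (innerₗ V) ⇑φ x = G x :=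
          congrFun hFG x
        rw [this]
        simp only [Complex.real_smul, smul_eq_mul]
        rfl
    _ = 0 := hmul

end FourierHelpers

/-- If `N_ψ^d = 1` a.e. on the ball `B_ρ`, then ball-limited data is reconstructed exactly from
its discrete orientation score by summation over orientations. -/
theorem discrete_orientation_score_reconstruction_by_summation
    (ψ : R3 → ℂ) (hψ1 : MemLp ψ 1 (volume : Measure R3)) (hψ2 : MemLp ψ 2 (volume : Measure R3))
    (No : ℕ) (nvec : Fin No → S2) (Δ : Fin No → ℝ) (hΔ : ∀ i, 0 < Δ i)
    (R : Fin No → (R3 ≃ₗᵢ[ℝ] R3))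
    (hdet : ∀ i, LinearMap.det ((R i).toLinearEquiv : R3 →ₗ[ℝ] R3) = 1)
    (hRez : ∀ i, R i ez = (nvec i : R3))
    (ρ : ℝ) (hρ : 0 < ρ)
    (hNone : ∀ᵐ ω ∂(volume : Measure R3).restrict (Metric.ball (0 : R3) ρ),
      ∑ i, (Δ i : ℂ) * FourierTransform.fourier ψ ((R i).symm ω) = 1)
    (f : R3 → ℂ) (hf1 : MemLp f 1 (volume : Measure R3)) (hf2 : MemLp f 2 (volume : Measure R3))
    (hsupp : Function.support (FourierTransform.fourier f) ⊆ Metric.ball (0 : R3) ρ) :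
    (fun x => ∑ i, (Δ i : ℂ) * OScoreD (R i) ψ f x) =ᵐ[(volume : Measure R3)] f := by
  have hψ : Integrable ψ (volume : Measure R3) := memLp_one_iff_integrable.1 hψ1
  have hf : Integrable f (volume : Measure R3) := memLp_one_iff_integrable.1 hf1
  -- the rotated-reflected-conjugated wavelets
  set g : Fin No → R3 → ℂ := fun i y => (starRingEnd ℂ) (ψ ((R i).symm (-y))) with hg
  have hA : ∀ i, MeasurePreserving (fun y : R3 => (R i).symm (-y)) volume volume := by
    intro i
    exact ((R i).symm.measurePreserving).comp (Measure.measurePreserving_neg _)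
  have hgint : ∀ i, Integrable (g i) (volume : Measure R3) := by
    intro i
    have h1 : Integrable (fun y : R3 => ψ ((R i).symm (-y))) volume :=
      ((hA i).integrable_comp hψ.aestronglyMeasurable).2 hψ
    exact (Complex.conjCLE : ℂ →L[ℝ] ℂ).integrable_comp h1
  -- orientation scores as convolutions
  have hOS : ∀ i x, OScoreD (R i) ψ f x = ∫ t, g i t * f (x - t) := by
    intro i x
    have h1 := (integral_sub_left_eq_self (fun t => g i t * f (x - t)) volume x).symm
    simp only [hg] at h1 ⊢
    rw [OScoreD]
    rw [h1]
    congr 1 with x'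
    rw [neg_sub, sub_sub_cancel]
  -- integrability of the reconstruction
  have hconv : ∀ i, Integrable (fun x => ∫ t, g i t * f (x - t)) (volume : Measure R3) := by
    intro i
    exact (hgint i).integrable_convolution (ContinuousLinearMap.mul ℂ ℂ) hf
  have hAint : Integrable (fun x => ∑ i, (Δ i : ℂ) * ∫ t, g i t * f (x - t))
      (volume : Measure R3) :=
    integrable_finset_sum _ fun i _ => ((hconv i).const_mul _)
  -- Fourier transform of each wavelet
  have hgF : ∀ i w, 𝓕 (g i) w = (starRingEnd ℂ) (𝓕 ψ ((R i).symm w)) := by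
    intro i w
    have h1 : 𝓕 (g i) w
        = (starRingEnd ℂ) (𝓕 (fun y : R3 => ψ ((R i).symm (-y))) (-w)) := ft_conj _ w
    have h2 := Real.fourier_comp_linearIsometry
      (((LinearIsometryEquiv.neg ℝ : R3 ≃ₗᵢ[ℝ] R3)).trans (R i).symm) ψ (-w)
    simp only [Function.comp_def, LinearIsometryEquiv.trans_apply,
      LinearIsometryEquiv.coe_neg] at h2
    rw [h1, h2]
    simp
  -- Fourier transform of the reconstruction
  have hFA : ∀ w, 𝓕 (fun x => ∑ i, (Δ i : ℂ) * ∫ t, g i t * f (x - t)) w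
      = (∑ i, (Δ i : ℂ) * (starRingEnd ℂ) (𝓕 ψ ((R i).symm w))) * 𝓕 f w := by
    intro w
    rw [ft_sum Finset.univ (fun i => ((hconv i).const_mul _)) w, Finset.sum_mul]
    congr 1 with i
    rw [ft_smul, ft_conv (hgint i) hf, hgF]
    ring
  -- the difference and its Fourier transform
  set D : R3 → ℂ := fun x => (∑ i, (Δ i : ℂ) * ∫ t, g i t * f (x - t)) - f x with hD
  have hDint : Integrable D (volume : Measure R3) := hAint.sub hf
  have hFDae : ∀ᵐ w ∂(volume : Measure R3), 𝓕 D w = 0 := by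
    have hball := (ae_restrict_iff' measurableSet_ball).1 hNone
    filter_upwards [hball] with w hw
    rw [hD]
    rw [ft_sub hAint hf w, hFA w]
    by_cases hb : w ∈ Metric.ball (0 : R3) ρ
    · have hsum : (∑ i, (Δ i : ℂ) * (starRingEnd ℂ) (𝓕 ψ ((R i).symm w))) = 1 := by
        have h1 := hw hb
        have h2 : (∑ i, (Δ i : ℂ) * (starRingEnd ℂ) (𝓕 ψ ((R i).symm w)))
            = (starRingEnd ℂ) (∑ i, (Δ i : ℂ) * 𝓕 ψ ((R i).symm w)) := by
          rw [map_sum]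
          congr 1 with i
          rw [map_mul, Complex.conj_ofReal]
        rw [h2, h1, map_one]
      rw [hsum, one_mul, sub_self]
    · have h0 : 𝓕 f w = 0 := by
        by_contra hne
        exact hb (hsupp (Function.mem_support.2 hne))
      rw [h0, mul_zero, sub_self]
  have hFcont : Continuous (𝓕 D) :=
    VectorFourier.fourierIntegral_continuous Real.continuous_fourierChar continuous_inner hDint
  have hFD : ∀ w, 𝓕 D w = 0 := by
    have heq : 𝓕 D = fun _ => (0 : ℂ) :=
      (hFcont.ae_eq_iff_eq (μ := (volume : Measure R3)) continuous_const).1 hFDae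
    exact fun w => congrFun heq w
  have hzero := ft_inj hDint hFD
  filter_upwards [hzero] with x hx
  have : (∑ i, (Δ i : ℂ) * ∫ t, g i t * f (x - t)) = f x := by
    have := sub_eq_zero.1 hx
    exact this
  rw [← this]
  congr 1 with i
  rw [hOS]
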